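/- Let (Ω, 𝔉, P) be a probability space with a dynamical system (τ_x)_{x∈ℝ^d}, let Q ⊆ ℝ^d be a bounded convex open set with 0 ∈ Q, let 1 < p, q < ∞ with 1/p + 1/q = 1, and let f ∈ L^p(Ω;P). Let ω ∈ Ω be a point at which the conclusions of the ergodic theorem hold, namely: x ↦ f(τ_x ω) is measurable and locally p-integrable, (i) for every continuous ψ : closure(Q) → ℝ one has n^{−d} ∫_{nQ} ψ(x/n) f(τ_x ω) dx → (∫_Ω f dP) · ∫_Q ψ(x) dx as n → ∞, and (ii) sup_{n∈ℕ} n^{−d} ∫_{nQ} |f(τ_x ω)|^p dx < ∞. Then for every φ ∈ L^q(Q): n^{−d} ∫_{nQ} φ(x/n) f(τ_x ω) dx → (∫_Ω f dP) · ∫_Q φ(x) dx as n → ∞. -/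

import Mathlib

open MeasureTheory Filter Pointwise
open scoped ENNReal

lemma aux_map_smul {d : ℕ} {R : ℝ} (hR : 0 < R) (Q : Set (EuclideanSpace ℝ (Fin d)))
    (hQm : MeasurableSet Q) :
    Measure.map (fun x : EuclideanSpace ℝ (Fin d) => R⁻¹ • x) (volume.restrict (R • Q))
      = ENNReal.ofReal (R ^ d) • volume.restrict Q := by
  have hR' : R⁻¹ ≠ 0 := inv_ne_zero hR.ne'
  have hmeas : Measurable (fun x : EuclideanSpace ℝ (Fin d) => R⁻¹ • x) :=
    measurable_const_smul _
  have hpre : (fun x : EuclideanSpace ℝ (Fin d) => R⁻¹ • x) ⁻¹' Q = R • Q := by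
    rw [Set.preimage_smul₀ hR', inv_inv]
  have h1 : Measure.map (fun x : EuclideanSpace ℝ (Fin d) => R⁻¹ • x) volume
      = ENNReal.ofReal (R ^ d) • volume := by
    rw [show (fun x : EuclideanSpace ℝ (Fin d) => R⁻¹ • x) = (R⁻¹ • ·) from rfl,
      Measure.map_addHaar_smul volume hR']
    congr 1
    rw [finrank_euclideanSpace_fin, inv_pow, inv_inv, abs_of_nonneg (by positivity)]
  calc Measure.map (fun x : EuclideanSpace ℝ (Fin d) => R⁻¹ • x) (volume.restrict (R • Q))
      = (Measure.map (fun x : EuclideanSpace ℝ (Fin d) => R⁻¹ • x) volume).restrict Q := by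
        rw [Measure.restrict_map hmeas hQm, hpre]
    _ = ENNReal.ofReal (R ^ d) • volume.restrict Q := by rw [h1, Measure.restrict_smul]

lemma aux_setIntegral_smul {d : ℕ} {R : ℝ} (hR : 0 < R) (Q : Set (EuclideanSpace ℝ (Fin d)))
    (hQm : MeasurableSet Q) (G : EuclideanSpace ℝ (Fin d) → ℝ) :
    ∫ x in R • Q, G (R⁻¹ • x) = R ^ d * (∫ x in Q, G x) := by
  have hR' : R⁻¹ ≠ 0 := inv_ne_zero hR.ne'
  let e : EuclideanSpace ℝ (Fin d) ≃ᵐ EuclideanSpace ℝ (Fin d) :=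
    (Homeomorph.smulOfNeZero R⁻¹ hR').toMeasurableEquiv
  have he : ⇑e = fun x : EuclideanSpace ℝ (Fin d) => R⁻¹ • x := rfl
  calc ∫ x in R • Q, G (R⁻¹ • x)
      = ∫ y, G y ∂(Measure.map e (volume.restrict (R • Q))) := (integral_map_equiv e G).symm
    _ = ∫ y, G y ∂(ENNReal.ofReal (R ^ d) • volume.restrict Q) := by
        rw [he, aux_map_smul hR Q hQm]
    _ = R ^ d * (∫ x in Q, G x) := by
        rw [integral_smul_measure, ENNReal.toReal_ofReal (by positivity), smul_eq_mul]

lemma aux_memLp_smul {d : ℕ} {R : ℝ} (hR : 0 < R) {Q : Set (EuclideanSpace ℝ (Fin d))}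
    (hQm : MeasurableSet Q) {q' : ℝ≥0∞} {ψ : EuclideanSpace ℝ (Fin d) → ℝ}
    (hψ : MemLp ψ q' (volume.restrict Q)) :
    MemLp (fun x => ψ (R⁻¹ • x)) q' (volume.restrict (R • Q)) := by
  have hmeas : AEMeasurable (fun x : EuclideanSpace ℝ (Fin d) => R⁻¹ • x)
      (volume.restrict (R • Q)) := (measurable_const_smul _).aemeasurable
  have hsm : MemLp ψ q' (ENNReal.ofReal (R ^ d) • volume.restrict Q) :=
    hψ.smul_measure ENNReal.ofReal_ne_top
  have h1 : AEStronglyMeasurable ψ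
      (Measure.map (fun x : EuclideanSpace ℝ (Fin d) => R⁻¹ • x)
        (volume.restrict (R • Q))) := by
    rw [aux_map_smul hR Q hQm]; exact hsm.1
  exact (memLp_map_measure_iff h1 hmeas).mp (by rw [aux_map_smul hR Q hQm]; exact hsm)

lemma aux_memLp_of_int {α : Type*} [MeasurableSpace α] {μ : Measure α} {g : α → ℝ}
    (hm : AEStronglyMeasurable g μ) {p : ℝ} (hp : 0 < p)
    (hint : Integrable (fun x => |g x| ^ p) μ) : MemLp g (ENNReal.ofReal p) μ := by
  have hp0 : ENNReal.ofReal p ≠ 0 := by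
    simp [ENNReal.ofReal_eq_zero, not_le, hp]
  refine (memLp_norm_rpow_iff hm hp0 ENNReal.ofReal_ne_top).mp ?_
  rw [ENNReal.div_self hp0 ENNReal.ofReal_ne_top, memLp_one_iff_integrable]
  simpa [ENNReal.toReal_ofReal hp.le, Real.norm_eq_abs] using hint

lemma aux_holder {α : Type*} [MeasurableSpace α] {μ : Measure α} {p q : ℝ}
    (hpq : Real.HolderConjugate p q) {u v : α → ℝ}
    (hu : MemLp u (ENNReal.ofReal q) μ) (hv : MemLp v (ENNReal.ofReal p) μ) :
    |∫ x, u x * v x ∂μ| ≤ (∫ x, |u x| ^ q ∂μ) ^ (1/q) * (∫ x, |v x| ^ p ∂μ) ^ (1/p) := by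
  have h1 : |∫ x, u x * v x ∂μ| ≤ ∫ x, ‖u x‖ * ‖v x‖ ∂μ := by
    calc |∫ x, u x * v x ∂μ| ≤ ∫ x, ‖u x * v x‖ ∂μ := by
          rw [← Real.norm_eq_abs]; exact norm_integral_le_integral_norm _
      _ = ∫ x, ‖u x‖ * ‖v x‖ ∂μ := by simp [norm_mul]
  have h2 := integral_mul_norm_le_Lp_mul_Lq hpq.symm hu hv
  calc |∫ x, u x * v x ∂μ| ≤ ∫ x, ‖u x‖ * ‖v x‖ ∂μ := h1
    _ ≤ (∫ x, ‖u x‖ ^ q ∂μ) ^ (1/q) * (∫ x, ‖v x‖ ^ p ∂μ) ^ (1/p) := h2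
    _ = (∫ x, |u x| ^ q ∂μ) ^ (1/q) * (∫ x, |v x| ^ p ∂μ) ^ (1/p) := by
        simp [Real.norm_eq_abs]

lemma aux_rpow_calc {p q s A B M : ℝ} (hp : 0 < p) (hpq : 1/p + 1/q = 1)
    (hs : 0 < s) (hA : 0 ≤ A) (hB : 0 ≤ B) (hM : s⁻¹ * B ≤ M) :
    s⁻¹ * ((s * A) ^ (1/q) * B ^ (1/p)) ≤ A ^ (1/q) * M ^ (1/p) := by
  have hs' : 0 < s⁻¹ := by positivity
  have h1 : s⁻¹ = s⁻¹ ^ (1/q) * s⁻¹ ^ (1/p) := by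
    rw [← Real.rpow_add hs', show 1/q + 1/p = 1 by linarith, Real.rpow_one]
  calc s⁻¹ * ((s * A) ^ (1/q) * B ^ (1/p))
      = (s⁻¹ ^ (1/q) * (s * A) ^ (1/q)) * (s⁻¹ ^ (1/p) * B ^ (1/p)) := by
        nth_rewrite 1 [h1]; ring
    _ = (s⁻¹ * (s * A)) ^ (1/q) * (s⁻¹ * B) ^ (1/p) := by
        rw [← Real.mul_rpow hs'.le (by positivity), ← Real.mul_rpow hs'.le hB]
    _ = A ^ (1/q) * (s⁻¹ * B) ^ (1/p) := by rw [inv_mul_cancel_left₀ hs.ne']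
    _ ≤ A ^ (1/q) * M ^ (1/p) := by
        refine mul_le_mul_of_nonneg_left ?_ (Real.rpow_nonneg hA _)
        exact Real.rpow_le_rpow (mul_nonneg hs'.le hB) hM (by positivity)

set_option maxHeartbeats 2000000 in

/-- **General ergodic theorem for the Lebesgue measure with `L^q` test functions**
(Theorem 2.21 of the paper).  Let `Q` be a bounded convex open set containing `0`, let
`1 < p,q < ∞` be conjugate, `f ∈ L^p(Ω;P)`, and let `ω` be a point where the realization
`x ↦ f(τ_x ω)` is measurable and locally `p`-integrable, where the ergodic averages against
continuous test functions converge, and where the `p`-averages over `nQ` are bounded.  Then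
for every `φ ∈ L^q(Q)`:
`n^{-d} ∫_{nQ} φ(x/n) f(τ_x ω) dx → (∫_Ω f dP) ∫_Q φ`. -/
theorem stmt12 (d : ℕ) (hd : 1 ≤ d) {Ω : Type*} [MeasurableSpace Ω]
    (P : Measure Ω) [IsProbabilityMeasure P]
    (τ : EuclideanSpace ℝ (Fin d) → Ω → Ω)
    (hbij : ∀ x, Function.Bijective (τ x))
    (hgrp : ∀ x y ω, τ x (τ y ω) = τ (x + y) ω)
    (hzero : ∀ ω, τ 0 ω = ω)
    (hmp : ∀ x, MeasurePreserving (τ x) P P)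
    (hmeas : Measurable fun q : EuclideanSpace ℝ (Fin d) × Ω => τ q.1 q.2)
    (Q : Set (EuclideanSpace ℝ (Fin d))) (hQb : Bornology.IsBounded Q)
    (hQc : Convex ℝ Q) (hQo : IsOpen Q) (hQ0 : (0 : EuclideanSpace ℝ (Fin d)) ∈ Q)
    (p q : ℝ) (hp : 1 < p) (hq : 1 < q) (hpq : 1/p + 1/q = 1)
    (f : Ω → ℝ) (hf : MemLp f (ENNReal.ofReal p) P)
    (ω : Ω)
    (hmeasω : Measurable fun x : EuclideanSpace ℝ (Fin d) => f (τ x ω))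
    (hloc : ∀ R : ℝ, 0 < R →
      IntegrableOn (fun x : EuclideanSpace ℝ (Fin d) => |f (τ x ω)| ^ p) (Metric.ball 0 R))
    (hi : ∀ ψ : EuclideanSpace ℝ (Fin d) → ℝ, ContinuousOn ψ (closure Q) →
      Tendsto (fun n : ℕ => (n : ℝ) ^ (-(d : ℝ)) *
          ∫ x in (n : ℝ) • Q, ψ ((n : ℝ)⁻¹ • x) * f (τ x ω))
        atTop (nhds ((∫ ω', f ω' ∂P) * ∫ x in Q, ψ x)))
    (hii : ∃ M : ℝ, ∀ n : ℕ,
      (n : ℝ) ^ (-(d : ℝ)) * (∫ x in (n : ℝ) • Q, |f (τ x ω)| ^ p) ≤ M) :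
    ∀ φ : EuclideanSpace ℝ (Fin d) → ℝ,
      MemLp φ (ENNReal.ofReal q) (volume.restrict Q) →
      Tendsto (fun n : ℕ => (n : ℝ) ^ (-(d : ℝ)) *
          ∫ x in (n : ℝ) • Q, φ ((n : ℝ)⁻¹ • x) * f (τ x ω))
        atTop (nhds ((∫ ω', f ω' ∂P) * ∫ x in Q, φ x)) := by
  intro φ hφ
  classical
  have hp0 : (0:ℝ) < p := lt_trans one_pos hp
  have hq0 : (0:ℝ) < q := lt_trans one_pos hq
  have hpq' : Real.HolderConjugate p q := Real.holderConjugate_iff.mpr ⟨hp, by simpa [one_div] using hpq⟩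
  have hQm : MeasurableSet Q := hQo.measurableSet
  obtain ⟨r, hr⟩ := hQb.subset_closedBall 0
  have hr0 : (0:ℝ) ≤ r := by simpa using hr hQ0
  obtain ⟨M, hM⟩ := hii
  have hdne : (d:ℝ) ≠ 0 := Nat.cast_ne_zero.mpr (by omega)
  have hM0 : 0 ≤ M := by
    have h0 := hM 0
    rw [Nat.cast_zero, Real.zero_rpow (neg_ne_zero.mpr hdne), zero_mul] at h0
    exact h0
  haveI : IsFiniteMeasure (volume.restrict Q) :=
    ⟨by rw [Measure.restrict_apply_univ]; exact hQb.measure_lt_top⟩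
  -- the realization is in `L^p` of every scaled set
  have hFmem : ∀ n : ℕ, 1 ≤ n →
      MemLp (fun x => f (τ x ω)) (ENNReal.ofReal p) (volume.restrict ((n:ℝ) • Q)) := by
    intro n hn
    have hR : (0:ℝ) < n := by exact_mod_cast hn
    refine aux_memLp_of_int hmeasω.aestronglyMeasurable hp0 ?_
    have hsub : (n:ℝ) • Q ⊆ Metric.ball 0 ((n:ℝ) * (r+1)) := by
      rintro x ⟨y, hy, rfl⟩
      have hy' : ‖y‖ ≤ r := by simpa using hr hy
      rw [mem_ball_zero_iff, norm_smul, Real.norm_eq_abs, abs_of_nonneg hR.le]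
      nlinarith
    exact (hloc _ (by nlinarith)).mono_set hsub
  -- integrability of the products
  have hone : (1:ℝ≥0∞) / 1 = 1 / ENNReal.ofReal q + 1 / ENNReal.ofReal p := by
    rw [one_div, one_div, one_div, inv_one, ← ENNReal.ofReal_inv_of_pos hq0,
      ← ENNReal.ofReal_inv_of_pos hp0, ← ENNReal.ofReal_add (by positivity) (by positivity),
      show q⁻¹ + p⁻¹ = 1 by rw [← one_div, ← one_div]; linarith, ENNReal.ofReal_one]
  have hint : ∀ ψ : EuclideanSpace ℝ (Fin d) → ℝ,
      MemLp ψ (ENNReal.ofReal q) (volume.restrict Q) → ∀ n : ℕ, 1 ≤ n →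
      Integrable (fun x => ψ ((n:ℝ)⁻¹ • x) * f (τ x ω)) (volume.restrict ((n:ℝ) • Q)) := by
    intro ψ hψ n hn
    have hR : (0:ℝ) < n := by exact_mod_cast hn
    haveI : ENNReal.HolderTriple (ENNReal.ofReal q) (ENNReal.ofReal p) 1 :=
      ⟨by simpa [one_div] using hone.symm⟩
    have h1 := (hFmem n hn).smul (r := 1) (aux_memLp_smul hR hQm hψ)
    rw [memLp_one_iff_integrable] at h1
    exact h1
  -- key uniform bound
  have key : ∀ ψ : EuclideanSpace ℝ (Fin d) → ℝ,
      MemLp ψ (ENNReal.ofReal q) (volume.restrict Q) → ∀ n : ℕ, 1 ≤ n →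
      |(n : ℝ) ^ (-(d : ℝ)) * ∫ x in (n:ℝ) • Q, ψ ((n:ℝ)⁻¹ • x) * f (τ x ω)|
        ≤ (∫ x in Q, |ψ x| ^ q) ^ (1/q) * M ^ (1/p) := by
    intro ψ hψ n hn
    have hR : (0:ℝ) < n := by exact_mod_cast hn
    have h1 := aux_holder hpq' (aux_memLp_smul hR hQm hψ) (hFmem n hn)
    have h2 : (∫ x in (n:ℝ) • Q, |ψ ((n:ℝ)⁻¹ • x)| ^ q)
        = (n:ℝ) ^ d * (∫ x in Q, |ψ x| ^ q) :=
      aux_setIntegral_smul hR Q hQm (fun y => |ψ y| ^ q)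
    have hA : (0:ℝ) ≤ ∫ x in Q, |ψ x| ^ q :=
      integral_nonneg fun x => Real.rpow_nonneg (abs_nonneg _) _
    have hB : (0:ℝ) ≤ ∫ x in (n:ℝ) • Q, |f (τ x ω)| ^ p :=
      integral_nonneg fun x => Real.rpow_nonneg (abs_nonneg _) _
    have hsinv : ((n:ℝ) ^ d)⁻¹ = (n:ℝ) ^ (-(d:ℝ)) := by
      rw [← Real.rpow_natCast (n:ℝ) d, ← Real.rpow_neg hR.le]
    rw [abs_mul, abs_of_nonneg (Real.rpow_nonneg hR.le _)]
    calc (n:ℝ) ^ (-(d:ℝ)) * |∫ x in (n:ℝ) • Q, ψ ((n:ℝ)⁻¹ • x) * f (τ x ω)|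
        ≤ (n:ℝ) ^ (-(d:ℝ)) *
          ((∫ x in (n:ℝ) • Q, |ψ ((n:ℝ)⁻¹ • x)| ^ q) ^ (1/q)
            * (∫ x in (n:ℝ) • Q, |f (τ x ω)| ^ p) ^ (1/p)) :=
          mul_le_mul_of_nonneg_left h1 (Real.rpow_nonneg hR.le _)
      _ = ((n:ℝ) ^ d)⁻¹ *
          (((n:ℝ) ^ d * (∫ x in Q, |ψ x| ^ q)) ^ (1/q)
            * (∫ x in (n:ℝ) • Q, |f (τ x ω)| ^ p) ^ (1/p)) := by rw [h2, hsinv]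
      _ ≤ (∫ x in Q, |ψ x| ^ q) ^ (1/q) * M ^ (1/p) := by
          refine aux_rpow_calc hp0 hpq (pow_pos hR d) hA hB ?_
          rw [hsinv]; exact hM n
  -- bound for the limit functionals
  have keyL : ∀ ψ : EuclideanSpace ℝ (Fin d) → ℝ,
      MemLp ψ (ENNReal.ofReal q) (volume.restrict Q) →
      |∫ x in Q, ψ x| ≤ (∫ x in Q, |ψ x| ^ q) ^ (1/q) * ((volume Q).toReal) ^ (1/p) := by
    intro ψ hψ
    have h1 := aux_holder hpq' hψ (memLp_const (1:ℝ))
    have h2 : (∫ x in Q, ψ x * (1:ℝ)) = ∫ x in Q, ψ x := by simp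
    have h3 : (∫ x in Q, |(1:ℝ)| ^ p) = (volume Q).toReal := by
      simp [Real.one_rpow, Measure.restrict_apply_univ]
      rfl
    rw [h2, h3] at h1
    exact h1
  -- extension of φ by zero
  have hφ' : MemLp (Q.indicator φ) (ENNReal.ofReal q) volume := by
    constructor
    · exact (aestronglyMeasurable_indicator_iff hQm).mpr hφ.1
    · rw [eLpNorm_indicator_eq_eLpNorm_restrict hQm]
      exact hφ.2
  have hq1E : (1:ℝ≥0∞) ≤ ENNReal.ofReal q := by
    rw [← ENNReal.ofReal_one]; exact ENNReal.ofReal_le_ofReal hq.le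
  set I := ∫ ω', f ω' ∂P with hIdef
  rw [Metric.tendsto_atTop]
  intro ε hε
  set C : ℝ := M ^ (1/p) + |I| * ((volume Q).toReal) ^ (1/p) + 1 with hCdef
  have hMp : (0:ℝ) ≤ M ^ (1/p) := Real.rpow_nonneg hM0 _
  have hVp : (0:ℝ) ≤ ((volume Q).toReal) ^ (1/p) := Real.rpow_nonneg ENNReal.toReal_nonneg _
  have hC0 : 0 < C := by
    have := mul_nonneg (abs_nonneg I) hVp
    rw [hCdef]; linarith
  set δ : ℝ := ε / (2 * C) with hδdef
  have hδ : 0 < δ := by rw [hδdef]; positivity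
  obtain ⟨g, gsupp, hgδ, gcont, gmem⟩ :=
    hφ'.exists_hasCompactSupport_eLpNorm_sub_le ENNReal.ofReal_ne_top
      (ε := ENNReal.ofReal δ) (ENNReal.ofReal_pos.mpr hδ).ne'
  have hgQ : MemLp g (ENNReal.ofReal q) (volume.restrict Q) := gmem.restrict Q
  have hsub : MemLp (φ - g) (ENNReal.ofReal q) (volume.restrict Q) := hφ.sub hgQ
  have hq0' : ENNReal.ofReal q ≠ 0 := by
    simp [ENNReal.ofReal_eq_zero, not_le, hq0]
  -- δ bound on the L^q distance on Q
  have hδb : (∫ x in Q, |(φ - g) x| ^ q) ^ (1/q) ≤ δ := by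
    have h2 : eLpNorm (φ - g) (ENNReal.ofReal q) (volume.restrict Q)
        = eLpNorm (Q.indicator φ - g) (ENNReal.ofReal q) (volume.restrict Q) := by
      refine eLpNorm_congr_ae ?_
      filter_upwards [ae_restrict_mem hQm] with x hx
      simp [Set.indicator_of_mem hx]
    have h1 : eLpNorm (φ - g) (ENNReal.ofReal q) (volume.restrict Q) ≤ ENNReal.ofReal δ := by
      rw [h2]
      exact (eLpNorm_mono_measure _ Measure.restrict_le_self).trans hgδ
    rw [hsub.eLpNorm_eq_integral_rpow_norm hq0' ENNReal.ofReal_ne_top] at h1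
    have h3 := (ENNReal.ofReal_le_ofReal_iff hδ.le).mp h1
    calc (∫ x in Q, |(φ - g) x| ^ q) ^ (1/q)
        = (∫ x in Q, ‖(φ - g) x‖ ^ (ENNReal.ofReal q).toReal) ^ (ENNReal.ofReal q).toReal⁻¹ := by
          rw [ENNReal.toReal_ofReal hq0.le]
          simp [Real.norm_eq_abs, one_div]
      _ ≤ δ := h3
  -- convergence for g
  have hgT := hi g gcont.continuousOn
  rw [Metric.tendsto_atTop] at hgT
  obtain ⟨N, hN⟩ := hgT (ε/2) (half_pos hε)
  refine ⟨max N 1, fun n hn => ?_⟩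
  have hn1 : 1 ≤ n := le_trans (le_max_right N 1) hn
  have hnN : N ≤ n := le_trans (le_max_left N 1) hn
  have hR : (0:ℝ) < n := by exact_mod_cast hn1
  have hdiff : ((n:ℝ) ^ (-(d:ℝ)) * ∫ x in (n:ℝ) • Q, φ ((n:ℝ)⁻¹ • x) * f (τ x ω))
      - ((n:ℝ) ^ (-(d:ℝ)) * ∫ x in (n:ℝ) • Q, g ((n:ℝ)⁻¹ • x) * f (τ x ω))
      = (n:ℝ) ^ (-(d:ℝ)) * ∫ x in (n:ℝ) • Q, (φ - g) ((n:ℝ)⁻¹ • x) * f (τ x ω) := by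
    rw [← mul_sub, ← integral_sub (hint φ hφ n hn1) (hint g hgQ n hn1)]
    congr 1
    exact integral_congr_ae (Filter.Eventually.of_forall fun x => by simp [sub_mul])
  have hb1 : |((n:ℝ) ^ (-(d:ℝ)) * ∫ x in (n:ℝ) • Q, φ ((n:ℝ)⁻¹ • x) * f (τ x ω))
      - ((n:ℝ) ^ (-(d:ℝ)) * ∫ x in (n:ℝ) • Q, g ((n:ℝ)⁻¹ • x) * f (τ x ω))|
      ≤ δ * M ^ (1/p) := by
    rw [hdiff]
    refine le_trans (key (φ - g) hsub n hn1) ?_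
    exact mul_le_mul_of_nonneg_right hδb hMp
  have hIφg : |I * (∫ x in Q, φ x) - I * (∫ x in Q, g x)|
      ≤ |I| * (δ * ((volume Q).toReal) ^ (1/p)) := by
    rw [← mul_sub, abs_mul]
    refine mul_le_mul_of_nonneg_left ?_ (abs_nonneg I)
    have h4 : (∫ x in Q, φ x) - (∫ x in Q, g x) = ∫ x in Q, (φ - g) x := by
      rw [← integral_sub (hφ.integrable hq1E) (hgQ.integrable hq1E)]
      exact integral_congr_ae (Filter.Eventually.of_forall fun x => by simp)
    rw [h4]
    refine le_trans (keyL (φ - g) hsub) ?_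
    exact mul_le_mul_of_nonneg_right hδb hVp
  have hNg := hN n hnN
  rw [Real.dist_eq] at hNg ⊢
  have hδC : δ * C = ε / 2 := by
    rw [hδdef]; field_simp
  have htri : |((n:ℝ) ^ (-(d:ℝ)) * ∫ x in (n:ℝ) • Q, φ ((n:ℝ)⁻¹ • x) * f (τ x ω))
        - I * ∫ x in Q, φ x|
      ≤ |((n:ℝ) ^ (-(d:ℝ)) * ∫ x in (n:ℝ) • Q, φ ((n:ℝ)⁻¹ • x) * f (τ x ω))
          - ((n:ℝ) ^ (-(d:ℝ)) * ∫ x in (n:ℝ) • Q, g ((n:ℝ)⁻¹ • x) * f (τ x ω))|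
        + |((n:ℝ) ^ (-(d:ℝ)) * ∫ x in (n:ℝ) • Q, g ((n:ℝ)⁻¹ • x) * f (τ x ω))
            - I * ∫ x in Q, g x|
        + |I * (∫ x in Q, φ x) - I * (∫ x in Q, g x)| := by
    have := abs_sub_le
      ((n:ℝ) ^ (-(d:ℝ)) * ∫ x in (n:ℝ) • Q, φ ((n:ℝ)⁻¹ • x) * f (τ x ω))
      ((n:ℝ) ^ (-(d:ℝ)) * ∫ x in (n:ℝ) • Q, g ((n:ℝ)⁻¹ • x) * f (τ x ω))
      (I * ∫ x in Q, φ x)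
    have h5 := abs_sub_le
      ((n:ℝ) ^ (-(d:ℝ)) * ∫ x in (n:ℝ) • Q, g ((n:ℝ)⁻¹ • x) * f (τ x ω))
      (I * ∫ x in Q, g x)
      (I * ∫ x in Q, φ x)
    have h6 : |I * (∫ x in Q, g x) - I * ∫ x in Q, φ x|
        = |I * (∫ x in Q, φ x) - I * (∫ x in Q, g x)| := abs_sub_comm _ _
    linarith
  have hfin : δ * M ^ (1/p) + |I| * (δ * ((volume Q).toReal) ^ (1/p)) = δ * (C - 1) := by
    rw [hCdef]; ring
  calc |((n:ℝ) ^ (-(d:ℝ)) * ∫ x in (n:ℝ) • Q, φ ((n:ℝ)⁻¹ • x) * f (τ x ω))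
        - I * ∫ x in Q, φ x| ≤ _ := htri
    _ < ε := by
        have hlt : δ * (C - 1) < δ * C := by nlinarith
        linarith [hb1, hNg, hIφg, hδC, hfin]
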